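/- Suppose char(𝕜) ∉ {2, 3}. Let n = 2, let μ be the multiplicatively antisymmetric matrix with μ 1 1 = μ 2 2 = 1, μ 1 2 = 2 and μ 2 1 = 1/2, and let B be the μ-symmetric matrix with B 1 1 = B 1 2 = B 2 1 = 0 and B 2 2 = 1. Then B is a symmetric matrix, but the skew Clifford algebra sCl(μ, B) has 𝕜-vector-space dimension 2 (in particular, x̄_1 = 0 in sCl(μ, B), so the converse of Corollary 3.11 fails). (Example 3.15.) -/

import Mathlib

open FreeAlgebra

/-- `μ` is multiplicatively antisymmetric: `μ i j * μ j i = 1` and `μ i i = 1`. -/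
def MulAntisym {𝕜 : Type*} [Field 𝕜] {n : ℕ} (μ : Fin n → Fin n → 𝕜) : Prop :=
  ∀ i j, μ i j * μ j i = 1 ∧ μ i i = 1

/-- `B` is `μ`-symmetric: `B i j = μ i j * B j i`. -/
def MuSymm {𝕜 : Type*} [Field 𝕜] {n : ℕ} (μ B : Fin n → Fin n → 𝕜) : Prop :=
  ∀ i j, B i j = μ i j * B j i

/-- Condition (★): for all `i, j` with `B i j ≠ 0`, one has `μ i k = μ k j` for all `k`. -/
def StarCond {𝕜 : Type*} [Field 𝕜] {n : ℕ} (μ B : Fin n → Fin n → 𝕜) : Prop :=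
  ∀ i j, B i j ≠ 0 → ∀ k, μ i k = μ k j

/-- The defining relations of the skew Clifford algebra: identifying
`x_i x_j + μ i j • (x_j x_i)` with `(2 * B i j) • 1`, which amounts to quotienting the free
algebra by the two-sided ideal generated by
`x_i x_j + μ i j • (x_j x_i) - (2 * B i j) • 1`. -/
inductive sClRel (𝕜 : Type*) [Field 𝕜] (n : ℕ) (μ B : Fin n → Fin n → 𝕜) :
    FreeAlgebra 𝕜 (Fin n) → FreeAlgebra 𝕜 (Fin n) → Prop
  | rel (i j : Fin n) : sClRel 𝕜 n μ B
      (ι 𝕜 i * ι 𝕜 j + μ i j • (ι 𝕜 j * ι 𝕜 i))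
      ((2 * B i j) • (1 : FreeAlgebra 𝕜 (Fin n)))

/-- The skew Clifford algebra `sCl(μ, B)`. -/
abbrev sCl (𝕜 : Type*) [Field 𝕜] (n : ℕ) (μ B : Fin n → Fin n → 𝕜) : Type _ :=
  RingQuot (sClRel 𝕜 n μ B)

/-- The image `x̄_i` of the generator `x_i` in the skew Clifford algebra. -/
noncomputable def sClGen (𝕜 : Type*) [Field 𝕜] (n : ℕ) (μ B : Fin n → Fin n → 𝕜)
    (i : Fin n) : sCl 𝕜 n μ B :=
  RingQuot.mkAlgHom 𝕜 (sClRel 𝕜 n μ B) (ι 𝕜 i)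
/-- Example 3.15: if `char 𝕜 ∉ {2, 3}`, with `μ = [[1,2],[1/2,1]]` and `B = [[0,0],[0,1]]`,
the matrix `B` is symmetric but `sCl(μ, B)` has dimension `2`; in particular `x̄_1 = 0`,
so the converse of Corollary 3.11 fails. -/
theorem example_symmetric_B_not_full_dimension
    (𝕜 : Type*) [Field 𝕜] (hchar2 : (2 : 𝕜) ≠ 0) (hchar3 : (3 : 𝕜) ≠ 0) :
    (∀ i j, (![![0, 0], ![0, 1]] : Fin 2 → Fin 2 → 𝕜) i j = ![![0, 0], ![0, 1]] j i) ∧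
    Module.finrank 𝕜 (sCl 𝕜 2 ![![1, 2], ![2⁻¹, 1]] ![![0, 0], ![0, 1]]) = 2 ∧
    sClGen 𝕜 2 ![![1, 2], ![2⁻¹, 1]] ![![0, 0], ![0, 1]] 0 = 0 := by
  classical
  have hrel : ∀ i j : Fin 2,
      sClGen 𝕜 2 ![![1, 2], ![2⁻¹, 1]] ![![0, 0], ![0, 1]] i *
        sClGen 𝕜 2 ![![1, 2], ![2⁻¹, 1]] ![![0, 0], ![0, 1]] j
      + (![![1, 2], ![2⁻¹, 1]] : Fin 2 → Fin 2 → 𝕜) i j •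
        (sClGen 𝕜 2 ![![1, 2], ![2⁻¹, 1]] ![![0, 0], ![0, 1]] j *
         sClGen 𝕜 2 ![![1, 2], ![2⁻¹, 1]] ![![0, 0], ![0, 1]] i)
      = (2 * (![![0, 0], ![0, 1]] : Fin 2 → Fin 2 → 𝕜) i j) • 1 := by
    intro i j
    have := RingQuot.mkAlgHom_rel 𝕜 (sClRel.rel (𝕜 := 𝕜) (n := 2)
      (μ := ![![1, 2], ![2⁻¹, 1]]) (B := ![![0, 0], ![0, 1]]) i j)
    simpa [sClGen, map_add, map_mul, map_smul, map_one] using this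
  set x₀ := sClGen 𝕜 2 ![![1, 2], ![2⁻¹, 1]] ![![0, 0], ![0, 1]] 0 with hx0
  set x₁ := sClGen 𝕜 2 ![![1, 2], ![2⁻¹, 1]] ![![0, 0], ![0, 1]] 1 with hx1
  -- the relation x₁² = 1
  have h11 : x₁ * x₁ = 1 := by
    have h := hrel 1 1
    simp only [Matrix.cons_val_one, Matrix.head_cons, Matrix.cons_val_zero, one_smul, mul_one] at h
    rw [← two_smul 𝕜] at h
    exact smul_right_injective _ hchar2 h
  -- the relation x₀x₁ + 2 x₁x₀ = 0
  have h01 : x₀ * x₁ + (2:𝕜) • (x₁ * x₀) = 0 := by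
    have h := hrel 0 1
    simp only [Matrix.cons_val_one, Matrix.head_cons, Matrix.cons_val_zero, mul_zero,
      zero_smul] at h
    exact h
  have eqA : x₀ + (2:𝕜) • (x₁ * (x₀ * x₁)) = 0 := by
    have h := congrArg (· * x₁) h01
    simp only [add_mul, smul_mul_assoc, zero_mul, mul_assoc] at h
    rw [h11, mul_one] at h
    exact h
  have eqB : x₁ * (x₀ * x₁) + (2:𝕜) • x₀ = 0 := by
    have h := congrArg (x₁ * ·) h01
    simp only [mul_add, mul_smul_comm, mul_zero] at h
    rw [show x₁ * (x₁ * x₀) = x₁ * x₁ * x₀ from (mul_assoc _ _ _).symm, h11, one_mul] at h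
    exact h
  have h0 : x₀ = 0 := by
    have key : (3:𝕜) • x₀ + (x₀ + (2:𝕜) • (x₁ * (x₀ * x₁)))
        = (2:𝕜) • (x₁ * (x₀ * x₁) + (2:𝕜) • x₀) := by module
    rw [eqA, eqB, add_zero, smul_zero] at key
    calc x₀ = (3:𝕜)⁻¹ • ((3:𝕜) • x₀) := by rw [smul_smul, inv_mul_cancel₀ hchar3, one_smul]
    _ = 0 := by rw [key, smul_zero]
  -- the algebra map to 𝕜 × 𝕜
  set f : FreeAlgebra 𝕜 (Fin 2) →ₐ[𝕜] 𝕜 × 𝕜 :=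
    FreeAlgebra.lift 𝕜 ![(0 : 𝕜 × 𝕜), ((1:𝕜), (-1:𝕜))] with hf
  have hfrel : ∀ ⦃x y⦄, sClRel 𝕜 2 ![![1, 2], ![2⁻¹, 1]] ![![0, 0], ![0, 1]] x y → f x = f y := by
    rintro x y ⟨i, j⟩
    fin_cases i <;> fin_cases j <;>
      simp [hf, map_add, map_mul, map_smul, lift_ι_apply, Prod.ext_iff] <;> norm_num
  set φ : sCl 𝕜 2 ![![1, 2], ![2⁻¹, 1]] ![![0, 0], ![0, 1]] →ₐ[𝕜] 𝕜 × 𝕜 :=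
    RingQuot.liftAlgHom 𝕜 ⟨f, hfrel⟩ with hφ
  have hφ1 : φ x₁ = ((1:𝕜), (-1:𝕜)) := by
    rw [hx1, sClGen, hφ, RingQuot.liftAlgHom_mkAlgHom_apply, hf]
    simp [lift_ι_apply]
  have hφsurj : Function.Surjective φ := by
    rintro ⟨a, b⟩
    refine ⟨((a + b) / 2) • 1 + ((a - b) / 2) • x₁, ?_⟩
    rw [map_add, map_smul, map_smul, map_one, hφ1]
    rw [Prod.ext_iff]
    constructor <;> simp <;> field_simp <;> ring
  -- the spanning set
  set S : Submodule 𝕜 (sCl 𝕜 2 ![![1, 2], ![2⁻¹, 1]] ![![0, 0], ![0, 1]]) :=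
    Submodule.span 𝕜 {1, x₁} with hS
  have h1S : (1 : sCl 𝕜 2 ![![1, 2], ![2⁻¹, 1]] ![![0, 0], ![0, 1]]) ∈ S :=
    Submodule.subset_span (Set.mem_insert _ _)
  have hx1S : x₁ ∈ S := Submodule.subset_span (Set.mem_insert_of_mem _ rfl)
  have hmul : ∀ a ∈ S, ∀ b ∈ S, a * b ∈ S := by
    intro a ha b hb
    refine Submodule.span_induction ?_ ?_ ?_ ?_ ha
    · intro u hu
      refine Submodule.span_induction ?_ ?_ ?_ ?_ hb
      · intro v hv
        rcases hu with rfl | hu <;> rcases hv with rfl | hv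
        · simpa using h1S
        · rcases hv with rfl; simpa using hx1S
        · rcases hu with rfl; simpa using hx1S
        · rcases hu with rfl; rcases hv with rfl
          rw [h11]; exact h1S
      · simpa using S.zero_mem
      · intro v w _ _ hv hw; rw [mul_add]; exact S.add_mem hv hw
      · intro c v _ hv; rw [mul_smul_comm]; exact S.smul_mem c hv
    · simpa using S.zero_mem
    · intro u v _ _ hu hv; rw [add_mul]; exact S.add_mem hu hv
    · intro c u _ hu; rw [smul_mul_assoc]; exact S.smul_mem c hu
  have htop : ∀ z : sCl 𝕜 2 ![![1, 2], ![2⁻¹, 1]] ![![0, 0], ![0, 1]], z ∈ S := by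
    intro z
    obtain ⟨w, rfl⟩ := RingQuot.mkAlgHom_surjective 𝕜
      (sClRel 𝕜 2 ![![1, 2], ![2⁻¹, 1]] ![![0, 0], ![0, 1]]) z
    induction w using FreeAlgebra.induction with
    | grade0 r =>
        rw [AlgHom.commutes, Algebra.algebraMap_eq_smul_one]
        exact S.smul_mem r h1S
    | grade1 i =>
        fin_cases i
        · show sClGen 𝕜 2 ![![1, 2], ![2⁻¹, 1]] ![![0, 0], ![0, 1]] 0 ∈ S
          rw [← hx0, h0]; exact S.zero_mem
        · show sClGen 𝕜 2 ![![1, 2], ![2⁻¹, 1]] ![![0, 0], ![0, 1]] 1 ∈ S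
          rw [← hx1]; exact hx1S
    | mul a b ha hb => rw [map_mul]; exact hmul _ ha _ hb
    | add a b ha hb => rw [map_add]; exact S.add_mem ha hb
  have hspan : Submodule.span 𝕜 (Set.range
      ![(1 : sCl 𝕜 2 ![![1, 2], ![2⁻¹, 1]] ![![0, 0], ![0, 1]]), x₁]) = ⊤ := by
    rw [eq_top_iff]
    intro z _
    have : Set.range ![(1 : sCl 𝕜 2 ![![1, 2], ![2⁻¹, 1]] ![![0, 0], ![0, 1]]), x₁]
        = {1, x₁} := by
      ext u; simp [Fin.exists_fin_two, or_comm]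
    rw [this]
    exact htop z
  have hfin : Module.Finite 𝕜 (sCl 𝕜 2 ![![1, 2], ![2⁻¹, 1]] ![![0, 0], ![0, 1]]) :=
    ⟨⟨{1, x₁}, by
      rw [Finset.coe_insert, Finset.coe_singleton, eq_top_iff]
      intro z _
      exact htop z⟩⟩
  have hle : Module.finrank 𝕜 (sCl 𝕜 2 ![![1, 2], ![2⁻¹, 1]] ![![0, 0], ![0, 1]]) ≤ 2 := by
    simpa using finrank_le_of_span_eq_top hspan
  have hge : 2 ≤ Module.finrank 𝕜 (sCl 𝕜 2 ![![1, 2], ![2⁻¹, 1]] ![![0, 0], ![0, 1]]) := by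
    have hrange : LinearMap.range φ.toLinearMap = ⊤ :=
      LinearMap.range_eq_top.mpr hφsurj
    have h2 : Module.finrank 𝕜 (𝕜 × 𝕜) = 2 := by
      simp [Module.finrank_prod]
    calc 2 = Module.finrank 𝕜 (𝕜 × 𝕜) := h2.symm
    _ = Module.finrank 𝕜 (LinearMap.range φ.toLinearMap) := by rw [hrange, finrank_top]
    _ ≤ _ := LinearMap.finrank_range_le φ.toLinearMap
  refine ⟨?_, le_antisymm hle hge, h0⟩
  intro i j
  fin_cases i <;> fin_cases j <;> simp
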